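/- Let n ≥ 2 and L ≥ 0 be integers with n+L ≥ 1, let a ∈ ℂ, and let i, j be integers with 0 ≤ i, j ≤ n−2. Then ∫_ℂ conj(z)^i · z^j · ω(z|a) dA(z) = (Γ(n−i−1)·Γ(i+L+1)/Γ(n+L+1)) · μ_{i,j}, where μ_{i,j} = i+L+2+(n−i)|a|² if i = j, μ_{i,j} = −(i+L+1)·a if j = i+1, μ_{i,j} = −(n−i−1)·conj(a) if i = j+1, and μ_{i,j} = 0 otherwise. -/

import Mathlib

open MeasureTheory Filter Finset

noncomputable section

/-- The Lebesgue measure on `ℂ` divided by `π`. -/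
def dA : Measure ℂ := (ENNReal.ofReal Real.pi)⁻¹ • (volume : Measure ℂ)

/-- The deformed induced spherical weight
`ω(z|a) = (|z−a|² + (1+|a|²)(1+|z|²)/(n+L)) · |z|^{2L} · (1+|z|²)^{−(n+L+1)}`. -/
def omegaW (n L : ℕ) (a z : ℂ) : ℝ :=
  (‖z - a‖ ^ 2 +
      (1 + ‖a‖ ^ 2) * (1 + ‖z‖ ^ 2) / ((n : ℝ) + L)) *
    ‖z‖ ^ (2 * L) / (1 + ‖z‖ ^ 2) ^ (n + L + 1)

/-- The tridiagonal coefficient `μ_{i,j}` of the moment matrix. -/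
def muEntry (n L : ℕ) (a : ℂ) (i j : ℕ) : ℂ :=
  if i = j then ((i : ℂ) + L + 2 + ((n : ℂ) - i) * (‖a‖ ^ 2 : ℝ))
  else if j = i + 1 then -((i : ℂ) + L + 1) * a
  else if i = j + 1 then -((n : ℂ) - i - 1) * (starRingEnd ℂ a)
  else 0

section Aux
open Real

lemma pre1 : MeasurePreserving (fun x : ℝ => x + 1) volume volume :=
  measurePreserving_add_right volume 1

lemma emb1 : MeasurableEmbedding (fun x : ℝ => x + 1) :=
  (MeasurableEquiv.addRight (1:ℝ)).measurableEmbedding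

lemma preim1 : (fun x : ℝ => x + 1) ⁻¹' (Set.Ioi (1:ℝ)) = Set.Ioi 0 := by
  ext x; simp [Set.mem_Ioi]

lemma myIntOn_one_add (s : ℝ) (hs : s < -1) :
    IntegrableOn (fun t : ℝ => (1 + t) ^ s) (Set.Ioi (0:ℝ)) := by
  have key := (pre1.integrableOn_comp_preimage emb1 (f := fun u : ℝ => u ^ s)
    (s := Set.Ioi (1:ℝ))).mpr (integrableOn_Ioi_rpow_of_lt hs one_pos)
  rw [preim1] at key
  refine key.congr_fun (fun x hx => by simp [Function.comp, add_comm]) measurableSet_Ioi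

lemma myInt_one_add (s : ℝ) (hs : s < -1) :
    ∫ t in Set.Ioi (0:ℝ), (1 + t) ^ s = -1 / (s + 1) := by
  have key := pre1.setIntegral_preimage_emb emb1 (fun u : ℝ => u ^ s) (Set.Ioi (1:ℝ))
  rw [preim1] at key
  have : ∫ t in Set.Ioi (0:ℝ), (1 + t) ^ s = ∫ t in Set.Ioi (0:ℝ), (t + 1) ^ s := by
    simp [add_comm]
  rw [this, key, integral_Ioi_rpow_of_lt hs one_pos, Real.one_rpow]

lemma J_integrable (m N : ℕ) (h : m + 2 ≤ N) :
    IntegrableOn (fun t : ℝ => t ^ m / (1 + t) ^ N) (Set.Ioi (0:ℝ)) := by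
  refine Integrable.mono' (myIntOn_one_add ((m:ℝ) - N) (by
    have : (m:ℝ) + 2 ≤ N := by exact_mod_cast h
    linarith)) ?_ ?_
  · refine (ContinuousOn.aestronglyMeasurable ?_ measurableSet_Ioi)
    intro t ht
    have h1t : (0:ℝ) < 1 + t := by have := Set.mem_Ioi.mp ht; linarith
    exact ((continuous_pow m).continuousWithinAt).div
      (((continuous_const.add continuous_id').pow N).continuousWithinAt)
      (pow_pos h1t N).ne'
  · filter_upwards [ae_restrict_mem measurableSet_Ioi] with t ht
    have ht0 : (0:ℝ) < t := ht
    have h1t : (0:ℝ) < 1 + t := by linarith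
    rw [Real.norm_eq_abs, abs_of_nonneg (by positivity)]
    rw [Real.rpow_sub h1t, Real.rpow_natCast, Real.rpow_natCast]
    exact (div_le_div_iff_of_pos_right (pow_pos h1t N)).mpr
      (pow_le_pow_left₀ ht0.le (by linarith) m)

lemma J_val (m k : ℕ) :
    ∫ t in Set.Ioi (0:ℝ), t ^ m / (1 + t) ^ (m + k + 2) =
      (m.factorial * k.factorial : ℝ) / (m + k + 1).factorial := by
  induction m generalizing k with
  | zero =>
    have hlt : -((k:ℝ) + 2) < -1 := by
      have : (0:ℝ) ≤ k := Nat.cast_nonneg k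
      linarith
    have base := myInt_one_add (-((k:ℝ) + 2)) hlt
    have heq : ∀ t ∈ Set.Ioi (0:ℝ),
        t ^ 0 / (1 + t) ^ (0 + k + 2) = (1 + t) ^ (-((k:ℝ) + 2)) := by
      intro t ht
      have h1t : (0:ℝ) < 1 + t := by have : (0:ℝ) < t := ht; linarith
      rw [pow_zero, Real.rpow_neg h1t.le, ← Real.rpow_natCast (1+t) (0+k+2)]
      push_cast
      rw [one_div]
      ring_nf
    rw [setIntegral_congr_fun measurableSet_Ioi heq, base]
    have h3 : -((k:ℝ)+2)+1 = -((k:ℝ)+1) := by ring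
    rw [h3, neg_div_neg_eq, Nat.factorial_zero, Nat.factorial_succ]
    have hk1 : ((k:ℝ) + 1) ≠ 0 := by positivity
    have hf : (k.factorial : ℝ) ≠ 0 := by exact_mod_cast k.factorial_ne_zero
    push_cast
    field_simp
    simp
  | succ m ih =>
    have key : ∀ t ∈ Set.Ioi (0:ℝ),
        t ^ (m+1) / (1 + t) ^ (m + 1 + k + 2) =
          t ^ m / (1 + t) ^ (m + k + 2) - t ^ m / (1 + t) ^ (m + k + 3) := by
      intro t ht
      have h1t : (0:ℝ) < 1 + t := by have : (0:ℝ) < t := ht; linarith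
      have e1 : (1 + t) ^ (m + k + 3) = (1 + t) ^ (m + k + 2) * (1 + t) := by ring
      have : m + 1 + k + 2 = m + k + 3 := by omega
      rw [this, e1]
      field_simp
      ring
    rw [setIntegral_congr_fun measurableSet_Ioi key,
      integral_sub (J_integrable m (m+k+2) (by omega)) (J_integrable m (m+k+3) (by omega))]
    have ih2 := ih (k+1)
    have e0 : m + (k+1) + 2 = m + k + 3 := by omega
    have e1 : m + (k+1) + 1 = m + k + 2 := by omega
    rw [e0, e1] at ih2
    rw [ih k, ih2]
    have h1 : ((m+k+1).factorial : ℝ) ≠ 0 := by exact_mod_cast (m+k+1).factorial_ne_zero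
    have e2 : (m + 1 + k + 1) = (m + k + 2) := by omega
    rw [e2]
    have e3 : ((m+k+2).factorial : ℝ) = (m+k+2) * (m+k+1).factorial := by
      rw [show m+k+2 = (m+k+1)+1 from rfl, Nat.factorial_succ]; push_cast; ring
    have e4 : ((k+1).factorial : ℝ) = (k+1) * k.factorial := by
      rw [Nat.factorial_succ]; push_cast; ring
    have e5 : ((m+1).factorial : ℝ) = (m+1) * m.factorial := by
      rw [Nat.factorial_succ]; push_cast; ring
    rw [e3, e4, e5]
    have h2 : ((m:ℝ)+k+2) ≠ 0 := by positivity
    field_simp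
    ring


lemma Kdiag (m N : ℕ) :
    ∫ z : ℂ, (‖z‖ ^ (2*m) / (1 + ‖z‖^2)^N : ℝ) =
      Real.pi * ∫ t in Set.Ioi (0:ℝ), t ^ m / (1 + t) ^ N := by
  have h := integral_fun_norm_addHaar (volume : Measure ℂ)
    (fun r : ℝ => r ^ (2*m) / (1 + r^2) ^ N)
  rw [Complex.finrank_real_complex] at h
  rw [h]
  have hball : (volume : Measure ℂ).real (Metric.ball 0 1) = Real.pi := by
    rw [measureReal_def, Complex.volume_ball]
    simp
  rw [hball]
  have hsub := integral_comp_rpow_Ioi_of_pos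
    (g := fun t : ℝ => t ^ m / (1 + t) ^ N) (p := 2) two_pos
  have hcongr : ∀ x ∈ Set.Ioi (0:ℝ),
      (2 * x ^ ((2:ℝ) - 1)) • ((fun t : ℝ => t ^ m / (1 + t) ^ N) (x ^ (2:ℝ)))
        = 2 * (x ^ (2 - 1 : ℕ) • (x ^ (2*m) / (1 + x^2) ^ N)) := by
    intro x hx
    have hx0 : (0:ℝ) < x := hx
    have hx2 : x ^ (2:ℝ) = x ^ (2:ℕ) := by
      rw [← Real.rpow_natCast x 2]; norm_num
    have h21 : ((2:ℝ) - 1) = (1:ℝ) := by norm_num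
    rw [hx2, h21, Real.rpow_one]
    simp only [smul_eq_mul, pow_mul]
    norm_num
    ring
  rw [setIntegral_congr_fun measurableSet_Ioi hcongr, integral_const_mul] at hsub
  have h2 : ∫ y in Set.Ioi (0:ℝ), y ^ (2 - 1 : ℕ) • (y ^ (2*m) / (1 + y^2) ^ N)
      = (∫ t in Set.Ioi (0:ℝ), t ^ m / (1 + t) ^ N) / 2 := by
    rw [eq_div_iff (two_ne_zero), mul_comm]
    exact hsub
  rw [h2]
  simp only [smul_eq_mul, nsmul_eq_mul, Nat.cast_ofNat]
  ring

lemma Kdiag_dA (m N : ℕ) :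
    ∫ z : ℂ, (‖z‖ ^ (2*m) / (1 + ‖z‖^2)^N : ℝ) ∂dA =
      ∫ t in Set.Ioi (0:ℝ), t ^ m / (1 + t) ^ N := by
  rw [dA, integral_smul_measure, Kdiag]
  rw [ENNReal.toReal_inv, ENNReal.toReal_ofReal Real.pi_pos.le]
  rw [smul_eq_mul, ← mul_assoc, inv_mul_cancel₀ Real.pi_ne_zero, one_mul]

lemma Kvanish (p q : ℕ) (hpq : p ≠ q) (g : ℝ → ℝ) :
    ∫ z : ℂ, (starRingEnd ℂ z) ^ p * z ^ q * ((g ‖z‖ : ℝ) : ℂ) = 0 := by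
  set f : ℂ → ℂ := fun z => (starRingEnd ℂ z) ^ p * z ^ q * ((g ‖z‖ : ℝ) : ℂ) with hf
  have hne : ((q:ℝ) - p) ≠ 0 := by
    intro h
    apply hpq
    have : (q:ℝ) = p := by linarith
    exact_mod_cast this.symm
  set θ : ℝ := Real.pi / ((q:ℝ) - p) with hθ
  set c : Circle := Circle.exp θ with hc
  have hrot := ((rotation c).measurePreserving).integral_comp
    (rotation c).toHomeomorph.measurableEmbedding f
  have hcz : ∀ z : ℂ, f ((rotation c) z) =
      ((starRingEnd ℂ (c:ℂ)) ^ p * (c:ℂ) ^ q) * f z := by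
    intro z
    rw [rotation_apply]
    have hnorm : ‖(c:ℂ) * z‖ = ‖z‖ := by
      rw [norm_mul]
      rw [Circle.norm_coe, one_mul]
    simp only [hf, hnorm, map_mul, mul_pow]
    ring
  have hlam : (starRingEnd ℂ (c:ℂ)) ^ p * (c:ℂ) ^ q = -1 := by
    rw [hc, Circle.coe_exp, ← Complex.exp_conj]
    have : (starRingEnd ℂ) ((θ:ℂ) * Complex.I) = -(θ * Complex.I) := by
      simp [Complex.conj_ofReal]
    rw [this, ← Complex.exp_nat_mul, ← Complex.exp_nat_mul, ← Complex.exp_add]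
    have harg : (p:ℂ) * -((θ:ℂ) * Complex.I) + (q:ℂ) * ((θ:ℂ) * Complex.I)
        = ((Real.pi : ℂ)) * Complex.I := by
      have hθπ : ((q:ℝ) - p) * θ = Real.pi := by
        rw [hθ]; field_simp
      have hc2 : (((q:ℂ) - p) * (θ:ℂ)) = (Real.pi : ℂ) := by
        exact_mod_cast congrArg (Complex.ofReal) hθπ
      ring_nf
      ring_nf at hc2
      rw [← hc2]
      push_cast
      ring
    rw [harg, Complex.exp_pi_mul_I]
  rw [funext hcz] at hrot
  rw [integral_const_mul, hlam] at hrot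
  have : (2:ℂ) * ∫ z : ℂ, f z = 0 := by linear_combination -hrot
  rcases mul_eq_zero.mp this with h | h
  · exact absurd h two_ne_zero
  · exact h

lemma Kvanish_dA (p q : ℕ) (hpq : p ≠ q) (g : ℝ → ℝ) :
    ∫ z : ℂ, (starRingEnd ℂ z) ^ p * z ^ q * ((g ‖z‖ : ℝ) : ℂ) ∂dA = 0 := by
  rw [dA, integral_smul_measure, Kvanish p q hpq g, smul_zero]

lemma Kint (p q LL M : ℕ) (h : p + q + 2*LL + 2 < 2*M) :
    Integrable (fun z : ℂ =>
      (starRingEnd ℂ z) ^ p * z ^ q * ((‖z‖^(2*LL) / (1+‖z‖^2)^M : ℝ) : ℂ))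
      (volume : Measure ℂ) := by
  set k : ℕ := p + q + 2*LL with hk
  set s : ℕ := 2*M - k with hs
  have hks : k + s = 2*M := by omega
  have hr : (Module.finrank ℝ ℂ : ℝ) < (s:ℝ) := by
    rw [Complex.finrank_real_complex]
    have : 2 < s := by omega
    exact_mod_cast this
  have hcont : Continuous (fun z : ℂ =>
      (starRingEnd ℂ z) ^ p * z ^ q * ((‖z‖^(2*LL) / (1+‖z‖^2)^M : ℝ) : ℂ)) := by
    refine ((Complex.continuous_conj.pow p).mul (continuous_pow q)).mul
      (Complex.continuous_ofReal.comp ?_)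
    refine Continuous.div (continuous_norm.pow _)
      ((continuous_const.add (continuous_norm.pow 2)).pow M) ?_
    intro z
    positivity
  refine ((integrable_one_add_norm hr).const_mul ((2:ℝ)^M)).mono'
    hcont.aestronglyMeasurable ?_
  refine Filter.Eventually.of_forall (fun z => ?_)
  have hx0 : (0:ℝ) ≤ ‖z‖ := norm_nonneg z
  have h1x : (0:ℝ) < 1 + ‖z‖ := by linarith
  have h1x2 : (0:ℝ) < 1 + ‖z‖^2 := by positivity
  have hnorm : ‖(starRingEnd ℂ z) ^ p * z ^ q * ((‖z‖^(2*LL) / (1+‖z‖^2)^M : ℝ) : ℂ)‖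
      = ‖z‖^k / (1+‖z‖^2)^M := by
    simp only [norm_mul, norm_pow, RCLike.norm_conj, Complex.norm_real, Real.norm_eq_abs,
      abs_of_nonneg (show (0:ℝ) ≤ ‖z‖^(2*LL)/(1+‖z‖^2)^M by positivity)]
    rw [hk, pow_add, pow_add, pow_mul]
    ring
  have hps : (0:ℝ) < (1+‖z‖)^s := by positivity
  have hrpow : (1 + ‖z‖) ^ (-(s:ℝ)) = ((1 + ‖z‖)^s)⁻¹ := by
    rw [Real.rpow_neg h1x.le, Real.rpow_natCast]
  have key : ‖z‖^k * (1+‖z‖)^s ≤ 2^M * (1+‖z‖^2)^M := by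
    have h1 : ‖z‖^k ≤ (1+‖z‖)^k := pow_le_pow_left₀ hx0 (by linarith) k
    have h2 : ‖z‖^k * (1+‖z‖)^s ≤ (1+‖z‖)^k * (1+‖z‖)^s :=
      mul_le_mul_of_nonneg_right h1 (by positivity)
    have h3 : (1+‖z‖)^k * (1+‖z‖)^s = ((1+‖z‖)^2)^M := by
      rw [← pow_add, hks, pow_mul]
    have h4 : (1+‖z‖)^2 ≤ 2 * (1+‖z‖^2) := by nlinarith [sq_nonneg (1 - ‖z‖)]
    have h5 : ((1+‖z‖)^2)^M ≤ (2 * (1+‖z‖^2))^M :=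
      pow_le_pow_left₀ (by positivity) h4 M
    rw [mul_pow] at h5
    calc ‖z‖^k * (1+‖z‖)^s ≤ ((1+‖z‖)^2)^M := h2.trans_eq h3
    _ ≤ 2^M * (1+‖z‖^2)^M := h5
  rw [hnorm, hrpow, ← div_eq_mul_inv, div_le_div_iff₀ (by positivity) hps]
  exact key

lemma Kdiag_eval (p LL k : ℕ) :
    ∫ z : ℂ, (starRingEnd ℂ z)^p * z^p * ((‖z‖^(2*LL)/(1+‖z‖^2)^(p+LL+k+2) : ℝ):ℂ) ∂dA =
      (((p+LL).factorial * k.factorial / ((p+LL+k+1).factorial) : ℝ) : ℂ) := by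
  have hpt : ∀ z : ℂ, (starRingEnd ℂ z)^p * z^p * ((‖z‖^(2*LL)/(1+‖z‖^2)^(p+LL+k+2) : ℝ):ℂ)
      = ((‖z‖^(2*(p+LL))/(1+‖z‖^2)^(p+LL+k+2) : ℝ):ℂ) := by
    intro z
    have h1 : (starRingEnd ℂ z)^p * z^p = ((‖z‖^(2*p) : ℝ) : ℂ) := by
      rw [← mul_pow, mul_comm, Complex.mul_conj]
      rw [show Complex.normSq z = ‖z‖^2 by
        rw [Complex.normSq_eq_norm_sq]]
      rw [← Complex.ofReal_pow, ← pow_mul]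
    rw [h1, ← Complex.ofReal_mul]
    congr 1
    have h2 : 2*(p+LL) = 2*p + 2*LL := by ring
    rw [h2, pow_add ‖z‖ (2*p) (2*LL), mul_div_assoc]
  simp only [hpt]
  rw [show ∫ z : ℂ, ((‖z‖^(2*(p+LL))/(1+‖z‖^2)^(p+LL+k+2) : ℝ):ℂ) ∂dA
      = ((∫ z : ℂ, (‖z‖^(2*(p+LL))/(1+‖z‖^2)^(p+LL+k+2) : ℝ) ∂dA : ℝ) : ℂ) from
    integral_ofReal]
  rw [Kdiag_dA (p+LL) (p+LL+k+2), J_val (p+LL) k]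

lemma Kvanish_dA2 (p q LL M : ℕ) (hpq : p ≠ q) :
    ∫ z : ℂ, (starRingEnd ℂ z)^p * z^q * ((‖z‖^(2*LL)/(1+‖z‖^2)^M : ℝ):ℂ) ∂dA = 0 :=
  Kvanish_dA p q hpq (fun r => r^(2*LL)/(1+r^2)^M)

lemma Kint_dA (p q LL M : ℕ) (h : p + q + 2*LL + 2 < 2*M) :
    Integrable (fun z : ℂ =>
      (starRingEnd ℂ z) ^ p * z ^ q * ((‖z‖^(2*LL) / (1+‖z‖^2)^M : ℝ) : ℂ)) dA := by
  refine (Kint p q LL M h).smul_measure ?_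
  simp [ENNReal.inv_ne_top, Real.pi_pos]


lemma hpt_lemma (n L : ℕ) (hnL : 1 ≤ n + L) (a : ℂ) (i j : ℕ) :
    ∀ z : ℂ, (starRingEnd ℂ z)^i * z^j * ((omegaW n L a z : ℝ) : ℂ) =
      (starRingEnd ℂ z)^(i+1) * z^(j+1) * ((‖z‖^(2*L)/(1+‖z‖^2)^(n+L+1) : ℝ):ℂ)
      + (-(starRingEnd ℂ a)) * ((starRingEnd ℂ z)^i * z^(j+1) * ((‖z‖^(2*L)/(1+‖z‖^2)^(n+L+1) : ℝ):ℂ))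
      + (-a) * ((starRingEnd ℂ z)^(i+1) * z^j * ((‖z‖^(2*L)/(1+‖z‖^2)^(n+L+1) : ℝ):ℂ))
      + ((‖a‖^2 : ℝ):ℂ) * ((starRingEnd ℂ z)^i * z^j * ((‖z‖^(2*L)/(1+‖z‖^2)^(n+L+1) : ℝ):ℂ))
      + (((1+‖a‖^2)/((n:ℝ)+L) : ℝ):ℂ) * ((starRingEnd ℂ z)^i * z^j * ((‖z‖^(2*L)/(1+‖z‖^2)^(n+L) : ℝ):ℂ)) := by
  intro z
  have hsq : ∀ w : ℂ, ((‖w‖:ℝ):ℂ)^2 = w * (starRingEnd ℂ w) := by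
    intro w
    rw [← Complex.ofReal_pow, show ‖w‖^2 = Complex.normSq w by
      rw [Complex.normSq_eq_norm_sq], Complex.mul_conj]
  have hden : (1:ℂ) + z * (starRingEnd ℂ z) ≠ 0 := by
    rw [← hsq z, ← Complex.ofReal_pow, show (1:ℂ) + ((‖z‖^2 : ℝ):ℂ) = ((1+‖z‖^2 : ℝ):ℂ) by
      push_cast; ring]
    exact Complex.ofReal_ne_zero.mpr (by positivity)
  have hnl : ((n:ℂ) + L) ≠ 0 := by
    have : ((n+L : ℕ):ℂ) ≠ 0 := Nat.cast_ne_zero.mpr (by omega)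
    push_cast at this
    exact this
  unfold omegaW
  simp only [Complex.ofReal_mul, Complex.ofReal_div, Complex.ofReal_add, Complex.ofReal_pow,
    Complex.ofReal_one, Complex.ofReal_natCast]
  simp only [pow_mul, hsq]
  rw [show n+L+1 = (n+L)+1 from rfl, pow_succ]
  rw [map_sub]
  field_simp
  ring

end Aux
theorem moment_matrix_deformed_weight (n L : ℕ) (hn : 2 ≤ n) (hnL : 1 ≤ n + L)
    (a : ℂ) (i j : ℕ) (hi : i ≤ n - 2) (hj : j ≤ n - 2) :
    (∫ z : ℂ, (starRingEnd ℂ z) ^ i * z ^ j * (omegaW n L a z : ℂ) ∂dA)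
      = ((Real.Gamma ((n : ℝ) - i - 1) * Real.Gamma ((i : ℝ) + L + 1) /
            Real.Gamma ((n : ℝ) + L + 1) : ℝ) : ℂ) * muEntry n L a i j := by
  obtain ⟨d, rfl⟩ : ∃ d, n = i + d + 2 := ⟨n - (i+2), by omega⟩
  have hj' : j ≤ i + d := by omega
  have hpt := hpt_lemma (i+d+2) L (by omega) a i j
  simp only [hpt]
  have H1 : Integrable (fun z : ℂ => (starRingEnd ℂ z)^(i+1) * z^(j+1) *
      ((‖z‖^(2*L)/(1+‖z‖^2)^(i+d+2+L+1) : ℝ):ℂ)) dA := Kint_dA _ _ _ _ (by omega)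
  have H2 : Integrable (fun z : ℂ => (-(starRingEnd ℂ a)) * ((starRingEnd ℂ z)^i * z^(j+1) *
      ((‖z‖^(2*L)/(1+‖z‖^2)^(i+d+2+L+1) : ℝ):ℂ))) dA := (Kint_dA _ _ _ _ (by omega)).const_mul _
  have H3 : Integrable (fun z : ℂ => (-a) * ((starRingEnd ℂ z)^(i+1) * z^j *
      ((‖z‖^(2*L)/(1+‖z‖^2)^(i+d+2+L+1) : ℝ):ℂ))) dA := (Kint_dA _ _ _ _ (by omega)).const_mul _
  have H4 : Integrable (fun z : ℂ => ((‖a‖^2 : ℝ):ℂ) * ((starRingEnd ℂ z)^i * z^j *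
      ((‖z‖^(2*L)/(1+‖z‖^2)^(i+d+2+L+1) : ℝ):ℂ))) dA := (Kint_dA _ _ _ _ (by omega)).const_mul _
  have H5 : Integrable (fun z : ℂ =>
      (((1+‖a‖^2)/(((i+d+2:ℕ):ℝ)+L) : ℝ):ℂ) * ((starRingEnd ℂ z)^i * z^j *
      ((‖z‖^(2*L)/(1+‖z‖^2)^(i+d+2+L) : ℝ):ℂ))) dA := (Kint_dA _ _ _ _ (by omega)).const_mul _
  have HC : Integrable (fun z : ℂ => (starRingEnd ℂ z)^(i+1) * z^(j+1) *
      ((‖z‖^(2*L)/(1+‖z‖^2)^(i+d+2+L+1) : ℝ):ℂ)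
      + (-(starRingEnd ℂ a)) * ((starRingEnd ℂ z)^i * z^(j+1) *
      ((‖z‖^(2*L)/(1+‖z‖^2)^(i+d+2+L+1) : ℝ):ℂ))) dA := by exact H1.add H2
  have HB : Integrable (fun z : ℂ => (starRingEnd ℂ z)^(i+1) * z^(j+1) *
      ((‖z‖^(2*L)/(1+‖z‖^2)^(i+d+2+L+1) : ℝ):ℂ)
      + (-(starRingEnd ℂ a)) * ((starRingEnd ℂ z)^i * z^(j+1) *
      ((‖z‖^(2*L)/(1+‖z‖^2)^(i+d+2+L+1) : ℝ):ℂ))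
      + (-a) * ((starRingEnd ℂ z)^(i+1) * z^j *
      ((‖z‖^(2*L)/(1+‖z‖^2)^(i+d+2+L+1) : ℝ):ℂ))) dA := by exact HC.add H3
  have HA : Integrable (fun z : ℂ => (starRingEnd ℂ z)^(i+1) * z^(j+1) *
      ((‖z‖^(2*L)/(1+‖z‖^2)^(i+d+2+L+1) : ℝ):ℂ)
      + (-(starRingEnd ℂ a)) * ((starRingEnd ℂ z)^i * z^(j+1) *
      ((‖z‖^(2*L)/(1+‖z‖^2)^(i+d+2+L+1) : ℝ):ℂ))
      + (-a) * ((starRingEnd ℂ z)^(i+1) * z^j *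
      ((‖z‖^(2*L)/(1+‖z‖^2)^(i+d+2+L+1) : ℝ):ℂ))
      + ((‖a‖^2 : ℝ):ℂ) * ((starRingEnd ℂ z)^i * z^j *
      ((‖z‖^(2*L)/(1+‖z‖^2)^(i+d+2+L+1) : ℝ):ℂ))) dA := by exact HB.add H4
  rw [integral_add HA H5, integral_add HB H4, integral_add HC H3, integral_add H1 H2,
      integral_const_mul, integral_const_mul, integral_const_mul, integral_const_mul]
  have hG1 : Real.Gamma (((i+d+2:ℕ):ℝ) - i - 1) = d.factorial := by
    rw [show ((i+d+2:ℕ):ℝ) - i - 1 = (d:ℝ)+1 by push_cast; ring, Real.Gamma_nat_eq_factorial]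
  have hG2 : Real.Gamma ((i:ℝ)+L+1) = (i+L).factorial := by
    rw [show (i:ℝ)+L+1 = ((i+L:ℕ):ℝ)+1 by push_cast; ring, Real.Gamma_nat_eq_factorial]
  have hG3 : Real.Gamma (((i+d+2:ℕ):ℝ)+L+1) = (i+d+L+2).factorial := by
    rw [show ((i+d+2:ℕ):ℝ)+L+1 = ((i+d+L+2:ℕ):ℝ)+1 by push_cast; ring,
      Real.Gamma_nat_eq_factorial]
  have nf1 : ((i+d+L+1).factorial : ℂ) ≠ 0 := by
    exact_mod_cast (Nat.cast_ne_zero (R := ℂ)).mpr (i+d+L+1).factorial_ne_zero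
  have nf2 : ((i+L).factorial : ℂ) ≠ 0 := by
    exact_mod_cast (Nat.cast_ne_zero (R := ℂ)).mpr (i+L).factorial_ne_zero
  have nf3 : ((d.factorial : ℕ) : ℂ) ≠ 0 := by
    exact_mod_cast (Nat.cast_ne_zero (R := ℂ)).mpr d.factorial_ne_zero
  have nf4 : (((i+d+2:ℕ):ℂ)+L) ≠ 0 := by
    have h0 : ((i+d+2+L : ℕ):ℂ) ≠ 0 := Nat.cast_ne_zero.mpr (by omega)
    intro h; apply h0; push_cast; push_cast at h; linear_combination h
  have e1 : ((i+L+1).factorial : ℂ) = ((i+L+1:ℕ):ℂ) * (i+L).factorial := by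
    exact_mod_cast congrArg (Nat.cast (R := ℂ)) (Nat.factorial_succ (i+L))
  have e2 : ((d+1).factorial : ℂ) = ((d+1:ℕ):ℂ) * d.factorial := by
    exact_mod_cast congrArg (Nat.cast (R := ℂ)) (Nat.factorial_succ d)
  have e3 : ((i+d+L+2).factorial : ℂ) = ((i+d+L+2:ℕ):ℂ) * (i+d+L+1).factorial := by
    exact_mod_cast congrArg (Nat.cast (R := ℂ)) (Nat.factorial_succ (i+d+L+1))
  by_cases hij : i = j
  · subst hij
    rw [Kvanish_dA2 i (i+1) L (i+d+2+L+1) (by omega),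
        Kvanish_dA2 (i+1) i L (i+d+2+L+1) (by omega)]
    rw [show i+d+2+L+1 = (i+1)+L+d+2 by omega, Kdiag_eval (i+1) L d]
    rw [show (i+1)+L+d+2 = i+L+(d+1)+2 by omega, Kdiag_eval i L (d+1)]
    rw [show i+d+2+L = i+L+d+2 by omega, Kdiag_eval i L d]
    unfold muEntry
    rw [if_pos rfl]
    rw [hG1, hG2, hG3]
    rw [show i+1+L = i+L+1 by omega, show i+L+1+d+1 = i+d+L+2 by omega,
        show i+L+(d+1)+1 = i+d+L+2 by omega, show i+L+d+1 = i+d+L+1 by omega]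
    push_cast
    rw [e1, e2, e3]
    push_cast
    field_simp
    ring
  · by_cases hji : j = i + 1
    · subst hji
      rw [Kvanish_dA2 (i+1) (i+1+1) L (i+d+2+L+1) (by omega),
          Kvanish_dA2 i (i+1+1) L (i+d+2+L+1) (by omega),
          Kvanish_dA2 i (i+1) L (i+d+2+L+1) (by omega),
          Kvanish_dA2 i (i+1) L (i+d+2+L) (by omega)]
      rw [show i+d+2+L+1 = (i+1)+L+d+2 by omega, Kdiag_eval (i+1) L d]
      unfold muEntry
      rw [if_neg (by omega), if_pos rfl]
      rw [hG1, hG2, hG3]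
      rw [show i+1+L = i+L+1 by omega, show i+L+1+d+1 = i+d+L+2 by omega]
      push_cast
      rw [e1, e3]
      push_cast
      field_simp
      ring
    · by_cases hij1 : i = j + 1
      · subst hij1
        rw [Kvanish_dA2 (j+1+1) (j+1) L (j+1+d+2+L+1) (by omega),
            Kvanish_dA2 (j+1+1) j L (j+1+d+2+L+1) (by omega),
            Kvanish_dA2 (j+1) j L (j+1+d+2+L+1) (by omega),
            Kvanish_dA2 (j+1) j L (j+1+d+2+L) (by omega)]
        rw [show j+1+d+2+L+1 = (j+1)+L+(d+1)+2 by omega, Kdiag_eval (j+1) L (d+1)]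
        unfold muEntry
        rw [if_neg (by omega), if_neg (by omega), if_pos rfl]
        rw [hG1, hG2, hG3]
        rw [show j+1+L = j+L+1 by omega, show j+L+1+(d+1)+1 = j+1+d+L+2 by omega]
        push_cast
        rw [e2, e3]
        push_cast
        rw [show ((j+L+1).factorial : ℂ) = ((j+L+1:ℕ):ℂ) * (j+L).factorial by
          exact_mod_cast congrArg (Nat.cast (R := ℂ)) (Nat.factorial_succ (j+L))]
        push_cast
        field_simp
        ring
      · rw [Kvanish_dA2 (i+1) (j+1) L (i+d+2+L+1) (by omega),
            Kvanish_dA2 i (j+1) L (i+d+2+L+1) (by omega),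
            Kvanish_dA2 (i+1) j L (i+d+2+L+1) (by omega),
            Kvanish_dA2 i j L (i+d+2+L+1) (by omega),
            Kvanish_dA2 i j L (i+d+2+L) (by omega)]
        unfold muEntry
        rw [if_neg (by omega), if_neg (by omega), if_neg (by omega)]
        simp
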